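/- Let Au ∈ M_{nu}(ℂ) have all eigenvalues λ with Re λ > 0, let As ∈ M_{ns}(ℂ) have all eigenvalues μ with Re μ ≤ 0, and let Aus (nu×ns), Bu (nu×p), Bs (ns×p), Cu (q×nu), Cs (q×ns), D (q×p) be complex matrices. Over K = RatFunc ℂ set T := [Cu Cs] · (s·I − fromBlocks(Au, Aus, 0, As))⁻¹ · [Bu; Bs] + D. Suppose X ∈ M_{nu}(ℂ) is an invertible Hermitian solution of the Lyapunov equation Auᴴ X + X Au − Cuᴴ Cu = 0, and set M := −X⁻¹ Cuᴴ. Let P ∈ M_q(ℂ) be unitary and define over K: T_D := P·Cu·(s·I − Au − M·Cu)⁻¹·M + P and T_N := P·[Cu Cs]·(s·I − fromBlocks(Au + M·Cu, Aus + M·Cs, 0, As))⁻¹·[Bu + M·D; Bs] + P·D. Then: T_D is inner with respect to the imaginary axis, i.e. T_D · T_D⋆ = 1; every pole α of T_D satisfies Re α < 0; every pole α of T_N satisfies Re α ≤ 0; and T_D · T = T_N, so that T = T_D⁻¹ · T_N. (Corollary 5.1 of the paper: continuous-time left-coprime factorization with an inner denominator.) -/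

import Mathlib

open Matrix

set_option synthInstance.maxHeartbeats 1000000
set_option maxHeartbeats 1000000

noncomputable section

abbrev K : Type := RatFunc ℂ

/-- `α` is a pole of `q`: a root of the denominator of `q` in lowest terms. -/
def IsPole (α : ℂ) (q : K) : Prop := Polynomial.eval α (RatFunc.denom q) = 0

/-- `α` is a pole of a matrix if it is a pole of some entry. -/
def MIsPole {I J : Type} (α : ℂ) (W : Matrix I J K) : Prop := ∃ i j, IsPole α (W i j)

/-- `W⋆`: the transpose of the entrywise application of `σc`. -/
def paraStar {I J : Type} (σc : K →+* K) (W : Matrix I J K) : Matrix J I K := (W.map σc)ᵀ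

/-- A complex matrix viewed as a matrix of rational functions. -/
def toK {I J : Type} (A : Matrix I J ℂ) : Matrix I J K :=
  A.map (fun c : ℂ => (RatFunc.C c : K))

/-- The matrix `s·I` over `K`. -/
def sI (n : Type) [Fintype n] [DecidableEq n] : Matrix n n K :=
  (RatFunc.X : K) • (1 : Matrix n n K)

namespace CCF

open Polynomial

def algK : ℂ[X] →+* K := algebraMap ℂ[X] K

def toP {I J : Type} (A : Matrix I J ℂ) : Matrix I J ℂ[X] := A.map (Polynomial.C : ℂ →+* ℂ[X])

variable {I J L n : Type}

lemma toK_eq (A : Matrix I J ℂ) : toK A = (toP A).map algK := by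
  ext i j; simp [toK, toP, algK, RatFunc.algebraMap_C]

lemma toK_mul [Fintype J] (A : Matrix I J ℂ) (B : Matrix J L ℂ) :
    toK (A * B) = toK A * toK B := by
  show ((A * B).map (RatFunc.C : ℂ →+* K)) = A.map (RatFunc.C : ℂ →+* K) * B.map (RatFunc.C : ℂ →+* K)
  exact Matrix.map_mul

lemma toK_add (A B : Matrix I J ℂ) : toK (A + B) = toK A + toK B := by
  ext i j; simp [toK]

lemma toK_neg (A : Matrix I J ℂ) : toK (-A) = -toK A := by
  ext i j; simp [toK]

lemma toK_one [Fintype n] [DecidableEq n] : toK (1 : Matrix n n ℂ) = 1 := by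
  ext i j; by_cases h : i = j <;> simp [toK, Matrix.one_apply, h]

lemma charmap [Fintype n] [DecidableEq n] (A : Matrix n n ℂ) :
    sI n - toK A = (charmatrix A).map algK := by
  ext i j
  by_cases h : i = j
  · subst h
    simp [sI, toK, algK, charmatrix_apply_eq, Matrix.one_apply, RatFunc.algebraMap_C,
      RatFunc.algebraMap_X]
  · simp [sI, toK, algK, charmatrix_apply_ne _ _ _ h, Matrix.one_apply, h,
      RatFunc.algebraMap_C]

lemma det_charmap [Fintype n] [DecidableEq n] (A : Matrix n n ℂ) :
    (sI n - toK A).det = algK A.charpoly := by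
  rw [charmap, ← RingHom.mapMatrix_apply, ← RingHom.map_det, Matrix.charpoly]

lemma algK_injective : Function.Injective algK :=
  RatFunc.algebraMap_injective ℂ

lemma charpoly_K_ne_zero [Fintype n] [DecidableEq n] (A : Matrix n n ℂ) :
    algK A.charpoly ≠ 0 := by
  intro h
  exact (A.charpoly_monic.ne_zero) (algK_injective (by simpa using h))

lemma isUnit_det_charmap [Fintype n] [DecidableEq n] (A : Matrix n n ℂ) :
    IsUnit (sI n - toK A).det := by
  rw [det_charmap]
  exact isUnit_iff_ne_zero.mpr (charpoly_K_ne_zero A)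

lemma resolvent_mul [Fintype n] [DecidableEq n] (A : Matrix n n ℂ) :
    (sI n - toK A) * (sI n - toK A)⁻¹ = 1 :=
  Matrix.mul_nonsing_inv _ (isUnit_det_charmap A)

lemma mul_resolvent [Fintype n] [DecidableEq n] (A : Matrix n n ℂ) :
    (sI n - toK A)⁻¹ * (sI n - toK A) = 1 :=
  Matrix.nonsing_inv_mul _ (isUnit_det_charmap A)

lemma resolvent_eq [Fintype n] [DecidableEq n] (A : Matrix n n ℂ) :
    (sI n - toK A)⁻¹ = (algK A.charpoly)⁻¹ • ((adjugate (charmatrix A)).map algK) := by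
  rw [Matrix.inv_def, det_charmap, charmap, Ring.inverse_eq_inv]
  congr 1
  have := RingHom.map_adjugate algK A.charmatrix
  simp only [RingHom.mapMatrix_apply] at this
  exact this.symm

lemma eval_charpoly [Fintype n] [DecidableEq n] (A : Matrix n n ℂ) (α : ℂ) :
    A.charpoly.eval α = (α • (1 : Matrix n n ℂ) - A).det := by
  rw [Matrix.charpoly, Polynomial.eval, ← Polynomial.coe_eval₂RingHom, RingHom.map_det]
  congr 1
  ext i j
  by_cases h : i = j
  · subst h; simp [charmatrix_apply_eq, Matrix.one_apply]
  · simp [charmatrix_apply_ne _ _ _ h, Matrix.one_apply, h]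

/-- Pole localization. -/
lemma pole_root {I J : Type} (W : Matrix I J K) (Q : ℂ[X]) (hQ : Q ≠ 0)
    (h : ∀ i j, ∃ r : ℂ[X], W i j = algK r / algK Q) :
    ∀ α : ℂ, MIsPole α W → Q.eval α = 0 := by
  rintro α ⟨i, j, hij⟩
  obtain ⟨r, hr⟩ := h i j
  have hdvd : RatFunc.denom (W i j) ∣ Q := (RatFunc.denom_dvd hQ).mpr ⟨r, hr⟩
  obtain ⟨e, he⟩ := hdvd
  rw [he, Polynomial.eval_mul, hij, zero_mul]


lemma toK_sub (A B : Matrix I J ℂ) : toK (A - B) = toK A - toK B := by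
  ext i j; simp [toK]

section paraStar

variable (σc : K →+* K)

lemma pS_mul [Fintype J] (A : Matrix I J K) (B : Matrix J L K) :
    paraStar σc (A * B) = paraStar σc B * paraStar σc A := by
  unfold paraStar
  rw [show (A * B).map σc = A.map σc * B.map σc from Matrix.map_mul, Matrix.transpose_mul]

lemma pS_add (A B : Matrix I J K) :
    paraStar σc (A + B) = paraStar σc A + paraStar σc B := by
  ext i j; simp [paraStar]

lemma pS_sub (A B : Matrix I J K) :
    paraStar σc (A - B) = paraStar σc A - paraStar σc B := by
  ext i j; simp [paraStar]

lemma pS_neg (A : Matrix I J K) : paraStar σc (-A) = -paraStar σc A := by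
  ext i j; simp [paraStar]

lemma pS_one [Fintype n] [DecidableEq n] : paraStar σc (1 : Matrix n n K) = 1 := by
  ext i j
  by_cases h : i = j <;> simp [paraStar, Matrix.one_apply, h, eq_comm]

lemma pS_toK (hσcC : ∀ c : ℂ, σc (RatFunc.C c) = RatFunc.C ((starRingEnd ℂ) c))
    (A : Matrix I J ℂ) : paraStar σc (toK A) = toK Aᴴ := by
  ext i j; simp [paraStar, toK, Matrix.conjTranspose_apply, hσcC]

lemma pS_sI (hσcX : σc RatFunc.X = -RatFunc.X) [Fintype n] [DecidableEq n] :
    paraStar σc (sI n) = -(sI n) := by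
  ext i j
  by_cases h : i = j
  · subst h; simp [paraStar, sI, Matrix.one_apply, hσcX]
  · simp [paraStar, sI, Matrix.one_apply, h, Ne.symm h]

end paraStar

/-- Entry representation for matrices of the relevant shape. -/
lemma entry_rep [Fintype n] (U : Matrix I n ℂ) (Adj : Matrix n n ℂ[X]) (V : Matrix n J ℂ)
    (W : Matrix I J ℂ) (Q : ℂ[X]) (hQ : Q ≠ 0) (i : I) (j : J) :
    ∃ r : ℂ[X],
      (toK U * ((algK Q)⁻¹ • Adj.map algK) * toK V + toK W) i j = algK r / algK Q := by
  refine ⟨(toP U * Adj * toP V) i j + Q * toP W i j, ?_⟩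
  have hm : toK U * (Adj.map algK) * toK V = (toP U * Adj * toP V).map algK := by
    rw [toK_eq U, toK_eq V,
      show (toP U * Adj * toP V).map algK
          = (toP U).map algK * Adj.map algK * (toP V).map algK by
        rw [show ((toP U * Adj) * toP V).map (algK : ℂ[X] →+* K)
              = ((toP U * Adj).map algK) * (toP V).map algK from Matrix.map_mul,
          show ((toP U) * Adj).map (algK : ℂ[X] →+* K)
              = ((toP U).map algK) * Adj.map algK from Matrix.map_mul]]
  have hsm : toK U * ((algK Q)⁻¹ • Adj.map algK) * toK V
      = (algK Q)⁻¹ • (toK U * Adj.map algK * toK V) := by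
    rw [Matrix.mul_smul, Matrix.smul_mul]
  rw [Matrix.add_apply, hsm, Matrix.smul_apply, hm, Matrix.map_apply]
  have hQK : algK Q ≠ 0 := fun h => hQ (algK_injective (by simpa using h))
  have hW : toK W i j = algK (toP W i j) := by
    simp [toK, toP, algK, RatFunc.algebraMap_C]
  rw [_root_.map_add, _root_.map_mul, hW, smul_eq_mul]
  field_simp

section blocks

variable {n₁ n₂ m₁ m₂ : Type}

lemma toK_fromBlocks (A : Matrix n₁ m₁ ℂ) (B : Matrix n₁ m₂ ℂ) (C : Matrix n₂ m₁ ℂ)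
    (D : Matrix n₂ m₂ ℂ) :
    toK (Matrix.fromBlocks A B C D) = Matrix.fromBlocks (toK A) (toK B) (toK C) (toK D) :=
  Matrix.fromBlocks_map A B C D _

lemma toK_fromRows (A : Matrix n₁ m₁ ℂ) (B : Matrix n₂ m₁ ℂ) :
    toK (Matrix.fromRows A B) = Matrix.fromRows (toK A) (toK B) := by
  ext (i | i) j <;> rfl

lemma toK_fromColumns (A : Matrix n₁ m₁ ℂ) (B : Matrix n₁ m₂ ℂ) :
    toK (Matrix.fromCols A B) = Matrix.fromCols (toK A) (toK B) := by
  ext i (j | j) <;> rfl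

lemma fromRows_add' {R : Type*} [AddCommMonoid R] (A₁ B₁ : Matrix n₁ m₁ R)
    (A₂ B₂ : Matrix n₂ m₁ R) :
    Matrix.fromRows (A₁ + B₁) (A₂ + B₂) = Matrix.fromRows A₁ A₂ + Matrix.fromRows B₁ B₂ := by
  ext (i | i) j <;> rfl

lemma sI_sum (n m : Type) [Fintype n] [DecidableEq n] [Fintype m] [DecidableEq m] :
    sI (n ⊕ m) = Matrix.fromBlocks (sI n) 0 0 (sI m) := by
  rw [sI, ← Matrix.fromBlocks_one, Matrix.fromBlocks_smul, smul_zero, smul_zero]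
  rfl

end blocks

end CCF

namespace CCF

lemma toK_zero {I J : Type} : toK (0 : Matrix I J ℂ) = 0 := by
  ext i j; simp [toK]

lemma fromBlocks_sub {R n₁ n₂ m₁ m₂ : Type} [SubtractionMonoid R]
    (A A' : Matrix n₁ m₁ R) (B B' : Matrix n₁ m₂ R) (C C' : Matrix n₂ m₁ R)
    (D D' : Matrix n₂ m₂ R) :
    Matrix.fromBlocks A B C D - Matrix.fromBlocks A' B' C' D' =
      Matrix.fromBlocks (A - A') (B - B') (C - C') (D - D') := by
  ext (i | i) (j | j) <;> rfl

end CCF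


open CCF Polynomial in
theorem continuous_coprime_factorization_inner_denominator
    (nu ns p q : ℕ)
    (σc : K →+* K)
    (hσcC : ∀ c : ℂ, σc (RatFunc.C c) = RatFunc.C ((starRingEnd ℂ) c))
    (hσcX : σc RatFunc.X = -RatFunc.X)
    (Au : Matrix (Fin nu) (Fin nu) ℂ) (Aus : Matrix (Fin nu) (Fin ns) ℂ)
    (As : Matrix (Fin ns) (Fin ns) ℂ)
    (Bu : Matrix (Fin nu) (Fin p) ℂ) (Bs : Matrix (Fin ns) (Fin p) ℂ)
    (Cu : Matrix (Fin q) (Fin nu) ℂ) (Cs : Matrix (Fin q) (Fin ns) ℂ)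
    (D : Matrix (Fin q) (Fin p) ℂ)
    (hAu : ∀ lam : ℂ, Au.charpoly.IsRoot lam → 0 < lam.re)
    (hAs : ∀ lam : ℂ, As.charpoly.IsRoot lam → lam.re ≤ 0)
    (T : Matrix (Fin q) (Fin p) K)
    (hT : T = toK (Matrix.fromCols Cu Cs) *
        (sI (Fin nu ⊕ Fin ns) - toK (Matrix.fromBlocks Au Aus 0 As))⁻¹ *
        toK (Matrix.fromRows Bu Bs) + toK D)
    (X : Matrix (Fin nu) (Fin nu) ℂ)
    (hX : Auᴴ * X + X * Au - Cuᴴ * Cu = 0)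
    (hXherm : X.IsHermitian)
    (hXinv : IsUnit X.det)
    (M : Matrix (Fin nu) (Fin q) ℂ)
    (hM : M = -(X⁻¹ * Cuᴴ))
    (P : Matrix (Fin q) (Fin q) ℂ)
    (hP : Pᴴ * P = 1 ∧ P * Pᴴ = 1)
    (TD : Matrix (Fin q) (Fin q) K)
    (hTD : TD = toK P * toK Cu *
        (sI (Fin nu) - toK Au - toK (M * Cu))⁻¹ * toK M + toK P)
    (TN : Matrix (Fin q) (Fin p) K)
    (hTN : TN = toK P * toK (Matrix.fromCols Cu Cs) *
        (sI (Fin nu ⊕ Fin ns) -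
          toK (Matrix.fromBlocks (Au + M * Cu) (Aus + M * Cs) 0 As))⁻¹ *
        toK (Matrix.fromRows (Bu + M * D) Bs)
        + toK P * toK D) :
    TD * paraStar σc TD = 1 ∧
    (∀ α : ℂ, MIsPole α TD → α.re < 0) ∧
    (∀ α : ℂ, MIsPole α TN → α.re ≤ 0) ∧
    TD * T = TN := by
  obtain ⟨hP1, hP2⟩ := hP
  -- ℂ-level facts
  have hXX : X⁻¹ * X = 1 := Matrix.nonsing_inv_mul X hXinv
  have hXX' : X * X⁻¹ = 1 := Matrix.mul_nonsing_inv X hXinv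
  have hCC : Cuᴴ * Cu = Auᴴ * X + X * Au := (sub_eq_zero.mp hX).symm
  set F : Matrix (Fin nu) (Fin nu) ℂ := Au + M * Cu with hFdef
  have hF : F = -(X⁻¹ * (Auᴴ * X)) := by
    rw [hFdef, hM]
    have h1 : X⁻¹ * (Cuᴴ * Cu) = X⁻¹ * (Auᴴ * X) + Au := by
      rw [hCC, Matrix.mul_add, ← Matrix.mul_assoc X⁻¹ X Au, hXX, Matrix.one_mul]
    rw [Matrix.neg_mul, Matrix.mul_assoc, h1]
    abel
  have hXiH : X⁻¹ᴴ = X⁻¹ := hXherm.inv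
  have hMH : Mᴴ = -(Cu * X⁻¹) := by
    rw [hM]
    simp [Matrix.conjTranspose_neg, Matrix.conjTranspose_mul, hXiH]
  have hFX : F * X⁻¹ = -(X⁻¹ * Auᴴ) := by
    rw [hF]
    simp [Matrix.neg_mul, Matrix.mul_assoc, hXX']
  have hFH : Fᴴ = -(X * (Au * X⁻¹)) := by
    rw [hF]
    simp [Matrix.conjTranspose_neg, Matrix.conjTranspose_mul, hXiH, hXherm.eq,
      Matrix.mul_assoc]
  have hXiFH : X⁻¹ * Fᴴ = -(Au * X⁻¹) := by
    rw [hFH]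
    simp [Matrix.mul_neg, ← Matrix.mul_assoc, hXX]
  have hMM : M * Mᴴ = -(F * X⁻¹) - X⁻¹ * Fᴴ := by
    rw [hFX, hXiFH, neg_neg, sub_neg_eq_add, hMH, hM]
    rw [Matrix.neg_mul, Matrix.mul_neg, neg_neg,
      Matrix.mul_assoc X⁻¹ Cuᴴ (Cu * X⁻¹), ← Matrix.mul_assoc Cuᴴ Cu X⁻¹, hCC,
      Matrix.add_mul, Matrix.mul_add,
      Matrix.mul_assoc Auᴴ X X⁻¹, hXX', Matrix.mul_one,
      Matrix.mul_assoc X Au X⁻¹, ← Matrix.mul_assoc X⁻¹ X (Au * X⁻¹), hXX,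
      Matrix.one_mul]
  -- K-level facts
  have hGl : ∀ {L : Type} (c : Matrix (Fin nu) L K),
      (sI (Fin nu) - toK F) * ((sI (Fin nu) - toK F)⁻¹ * c) = c := by
    intro L c; rw [← Matrix.mul_assoc, resolvent_mul, Matrix.one_mul]
  have hGr : ∀ {L : Type} (c : Matrix (Fin nu) L K),
      (sI (Fin nu) - toK F)⁻¹ * ((sI (Fin nu) - toK F) * c) = c := by
    intro L c; rw [← Matrix.mul_assoc, mul_resolvent, Matrix.one_mul]
  have hstar : paraStar σc (sI (Fin nu) - toK F) = -(sI (Fin nu)) - toK Fᴴ := by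
    rw [pS_sub, pS_sI σc hσcX, pS_toK σc hσcC]
  have hGsr : ∀ {L : Type} (c : Matrix (Fin nu) L K),
      (-(sI (Fin nu)) - toK Fᴴ) * (paraStar σc (sI (Fin nu) - toK F)⁻¹ * c) = c := by
    intro L c
    have h := congrArg (paraStar σc) (mul_resolvent (n := Fin nu) F)
    rw [pS_mul, hstar, pS_one] at h
    rw [← Matrix.mul_assoc, h, Matrix.one_mul]
  have hsmul : ∀ (B : Matrix (Fin nu) (Fin nu) K), sI (Fin nu) * B = B * sI (Fin nu) := by
    intro B; rw [sI, Matrix.smul_mul, Matrix.mul_smul, Matrix.one_mul, Matrix.mul_one]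
  have keyMM : toK (M * Mᴴ)
      = (sI (Fin nu) - toK F) * toK X⁻¹ + toK X⁻¹ * (-(sI (Fin nu)) - toK Fᴴ) := by
    rw [hMM, toK_sub, toK_neg, toK_mul, toK_mul]
    rw [Matrix.sub_mul, Matrix.mul_sub, Matrix.mul_neg, hsmul (toK X⁻¹)]
    abel
  have hCuY : ∀ {L : Type} (c : Matrix (Fin nu) L K),
      toK Cu * (toK X⁻¹ * c) = -(toK Mᴴ * c) := by
    intro L c
    rw [← Matrix.mul_assoc, ← toK_mul,
      show Cu * X⁻¹ = -Mᴴ by rw [hMH, neg_neg], toK_neg, Matrix.neg_mul]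
  have hYCuH : ∀ {L : Type} (c : Matrix (Fin q) L K),
      toK X⁻¹ * (toK Cuᴴ * c) = -(toK M * c) := by
    intro L c
    rw [← Matrix.mul_assoc, ← toK_mul,
      show X⁻¹ * Cuᴴ = -M by rw [hM, neg_neg], toK_neg, Matrix.neg_mul]
  have hbracket : ∀ {L : Type} (c : Matrix (Fin q) L K),
      toK Cu * ((sI (Fin nu) - toK F)⁻¹ * (toK M * (toK Mᴴ *
          (paraStar σc (sI (Fin nu) - toK F)⁻¹ * (toK Cuᴴ * c)))))
        + toK Cu * ((sI (Fin nu) - toK F)⁻¹ * (toK M * c))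
        + toK Mᴴ * (paraStar σc (sI (Fin nu) - toK F)⁻¹ * (toK Cuᴴ * c)) = 0 := by
    intro L c
    have h1 : toK M * (toK Mᴴ * (paraStar σc (sI (Fin nu) - toK F)⁻¹ * (toK Cuᴴ * c)))
        = toK (M * Mᴴ) * (paraStar σc (sI (Fin nu) - toK F)⁻¹ * (toK Cuᴴ * c)) := by
      rw [toK_mul, Matrix.mul_assoc]
    rw [h1, keyMM]
    simp only [Matrix.add_mul, Matrix.mul_add, Matrix.mul_assoc, hGr, hGsr, hCuY, hYCuH,
      Matrix.mul_neg, Matrix.neg_mul, neg_neg]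
    abel
  have hTD' : TD = toK P * (toK Cu * ((sI (Fin nu) - toK F)⁻¹ * toK M)) + toK P := by
    rw [hTD, sub_sub, ← toK_add, ← hFdef, Matrix.mul_assoc, Matrix.mul_assoc]
  have hTDstar : paraStar σc TD
      = toK Mᴴ * (paraStar σc (sI (Fin nu) - toK F)⁻¹ * (toK Cuᴴ * toK Pᴴ)) + toK Pᴴ := by
    rw [hTD']
    simp only [pS_add, pS_mul, pS_toK σc hσcC, Matrix.mul_assoc]
  have part1 : TD * paraStar σc TD = 1 := by
    have expand : TD * paraStar σc TD
        = toK P * (toK Cu * ((sI (Fin nu) - toK F)⁻¹ * (toK M * (toK Mᴴ *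
              (paraStar σc (sI (Fin nu) - toK F)⁻¹ * (toK Cuᴴ * toK Pᴴ)))))
            + toK Cu * ((sI (Fin nu) - toK F)⁻¹ * (toK M * toK Pᴴ))
            + toK Mᴴ * (paraStar σc (sI (Fin nu) - toK F)⁻¹ * (toK Cuᴴ * toK Pᴴ)))
          + toK P * toK Pᴴ := by
      rw [hTDstar, hTD']
      simp only [Matrix.add_mul, Matrix.mul_add, Matrix.mul_assoc]
      abel
    rw [expand, hbracket, Matrix.mul_zero, zero_add, ← toK_mul, hP2, toK_one]
  -- Part 4: TD * T = TN
  have hA2l : ∀ {L : Type} (c : Matrix (Fin nu ⊕ Fin ns) L K),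
      (sI (Fin nu ⊕ Fin ns) - toK (Matrix.fromBlocks Au Aus 0 As)) *
        ((sI (Fin nu ⊕ Fin ns) - toK (Matrix.fromBlocks Au Aus 0 As))⁻¹ * c) = c := by
    intro L c; rw [← Matrix.mul_assoc, resolvent_mul, Matrix.one_mul]
  have hRhr : ∀ {L : Type} (c : Matrix (Fin nu ⊕ Fin ns) L K),
      (sI (Fin nu ⊕ Fin ns) - toK (Matrix.fromBlocks F (Aus + M * Cs) 0 As))⁻¹ *
        ((sI (Fin nu ⊕ Fin ns) - toK (Matrix.fromBlocks F (Aus + M * Cs) 0 As)) * c) = c := by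
    intro L c; rw [← Matrix.mul_assoc, mul_resolvent, Matrix.one_mul]
  have hEC : toK (Matrix.fromBlocks F (Aus + M * Cs) 0 As) - toK (Matrix.fromBlocks Au Aus 0 As)
      = toK (Matrix.fromRows M (0 : Matrix (Fin ns) (Fin q) ℂ)) * toK (Matrix.fromCols Cu Cs) := by
    rw [← toK_mul, ← toK_sub]
    rw [Matrix.fromRows_mul_fromCols, fromBlocks_sub, hFdef]
    simp
  have hsIh : sI (Fin nu ⊕ Fin ns) - toK (Matrix.fromBlocks F (Aus + M * Cs) 0 As)
      = Matrix.fromBlocks (sI (Fin nu) - toK F) (-(toK (Aus + M * Cs))) 0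
          (sI (Fin ns) - toK As) := by
    rw [sI_sum, toK_fromBlocks, fromBlocks_sub, zero_sub, toK_zero, sub_zero]
  have hrowGM : (sI (Fin nu ⊕ Fin ns) - toK (Matrix.fromBlocks F (Aus + M * Cs) 0 As)) *
      Matrix.fromRows ((sI (Fin nu) - toK F)⁻¹ * toK M) (0 : Matrix (Fin ns) (Fin q) K)
      = toK (Matrix.fromRows M (0 : Matrix (Fin ns) (Fin q) ℂ)) := by
    rw [hsIh, Matrix.fromBlocks_mul_fromRows, toK_fromRows, toK_zero, Matrix.mul_zero,
      add_zero, hGl, Matrix.zero_mul, Matrix.mul_zero, add_zero]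
  have hRhE : ∀ {L : Type} (c : Matrix (Fin q) L K),
      (sI (Fin nu ⊕ Fin ns) - toK (Matrix.fromBlocks F (Aus + M * Cs) 0 As))⁻¹ *
        (toK (Matrix.fromRows M (0 : Matrix (Fin ns) (Fin q) ℂ)) * c)
      = Matrix.fromRows ((sI (Fin nu) - toK F)⁻¹ * toK M) (0 : Matrix (Fin ns) (Fin q) K) * c := by
    intro L c
    rw [← hrowGM, Matrix.mul_assoc, hRhr]
  have hCRE : ∀ {L : Type} (c : Matrix (Fin q) L K),
      toK (Matrix.fromCols Cu Cs) *
        ((sI (Fin nu ⊕ Fin ns) - toK (Matrix.fromBlocks F (Aus + M * Cs) 0 As))⁻¹ *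
          (toK (Matrix.fromRows M (0 : Matrix (Fin ns) (Fin q) ℂ)) * c))
      = toK Cu * ((sI (Fin nu) - toK F)⁻¹ * (toK M * c)) := by
    intro L c
    rw [hRhE, ← Matrix.mul_assoc, toK_fromColumns, Matrix.fromCols_mul_fromRows,
      Matrix.mul_zero, add_zero, Matrix.mul_assoc, Matrix.mul_assoc]
  have hdiff : ∀ {L : Type} (c : Matrix (Fin nu ⊕ Fin ns) L K),
      (sI (Fin nu ⊕ Fin ns) - toK (Matrix.fromBlocks F (Aus + M * Cs) 0 As))⁻¹ *
        (toK (Matrix.fromRows M (0 : Matrix (Fin ns) (Fin q) ℂ)) *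
          (toK (Matrix.fromCols Cu Cs) *
            ((sI (Fin nu ⊕ Fin ns) - toK (Matrix.fromBlocks Au Aus 0 As))⁻¹ * c)))
      = (sI (Fin nu ⊕ Fin ns) - toK (Matrix.fromBlocks F (Aus + M * Cs) 0 As))⁻¹ * c
        - (sI (Fin nu ⊕ Fin ns) - toK (Matrix.fromBlocks Au Aus 0 As))⁻¹ * c := by
    intro L c
    rw [← Matrix.mul_assoc (toK (Matrix.fromRows M (0 : Matrix (Fin ns) (Fin q) ℂ))), ← hEC,
      show toK (Matrix.fromBlocks F (Aus + M * Cs) 0 As) - toK (Matrix.fromBlocks Au Aus 0 As)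
          = (sI (Fin nu ⊕ Fin ns) - toK (Matrix.fromBlocks Au Aus 0 As))
            - (sI (Fin nu ⊕ Fin ns) - toK (Matrix.fromBlocks F (Aus + M * Cs) 0 As)) from
        (sub_sub_sub_cancel_left _ _ _).symm,
      Matrix.sub_mul, Matrix.mul_sub, hA2l, hRhr]
  have hBh : toK (Matrix.fromRows (Bu + M * D) Bs)
      = toK (Matrix.fromRows Bu Bs)
        + toK (Matrix.fromRows M (0 : Matrix (Fin ns) (Fin q) ℂ)) * toK D := by
    rw [← toK_mul, ← toK_add]
    rw [Matrix.fromRows_mul, Matrix.zero_mul, ← fromRows_add', add_zero]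
  have part4 : TD * T = TN := by
    have expandT : TD * T =
        toK P * (toK Cu * ((sI (Fin nu) - toK F)⁻¹ * (toK M * (toK (Matrix.fromCols Cu Cs) *
            ((sI (Fin nu ⊕ Fin ns) - toK (Matrix.fromBlocks Au Aus 0 As))⁻¹ *
              toK (Matrix.fromRows Bu Bs))))))
          + toK P * (toK Cu * ((sI (Fin nu) - toK F)⁻¹ * (toK M * toK D)))
          + toK P * (toK (Matrix.fromCols Cu Cs) *
              ((sI (Fin nu ⊕ Fin ns) - toK (Matrix.fromBlocks Au Aus 0 As))⁻¹ *
                toK (Matrix.fromRows Bu Bs)))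
          + toK P * toK D := by
      rw [hT, hTD']
      simp only [Matrix.add_mul, Matrix.mul_add, Matrix.mul_assoc]
      abel
    have expandN : TN =
        toK P * (toK (Matrix.fromCols Cu Cs) *
            ((sI (Fin nu ⊕ Fin ns) - toK (Matrix.fromBlocks F (Aus + M * Cs) 0 As))⁻¹ *
              toK (Matrix.fromRows Bu Bs)))
          + toK P * (toK (Matrix.fromCols Cu Cs) *
              ((sI (Fin nu ⊕ Fin ns) - toK (Matrix.fromBlocks F (Aus + M * Cs) 0 As))⁻¹ *
                (toK (Matrix.fromRows M (0 : Matrix (Fin ns) (Fin q) ℂ)) * toK D)))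
          + toK P * toK D := by
      rw [hTN, hBh]
      simp only [Matrix.add_mul, Matrix.mul_add, Matrix.mul_assoc]
    rw [expandT, expandN, ← hCRE, ← hCRE, hdiff]
    simp only [Matrix.mul_sub]
    abel
  -- eigenvalue location for F
  have hdetX : X.det ≠ 0 := hXinv.ne_zero
  have hFside : ∀ α : ℂ, (α • (1 : Matrix (Fin nu) (Fin nu) ℂ) - F).det = 0 → α.re < 0 := by
    intro α hdet
    have hsim : α • (1 : Matrix (Fin nu) (Fin nu) ℂ) - F
        = X⁻¹ * ((α • (1 : Matrix (Fin nu) (Fin nu) ℂ) + Auᴴ) * X) := by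
      rw [hF, sub_neg_eq_add, Matrix.add_mul, Matrix.mul_add, Matrix.smul_mul, Matrix.one_mul,
        Matrix.mul_smul, hXX]
    rw [hsim, Matrix.det_mul, Matrix.det_mul] at hdet
    have hdXi : X⁻¹.det ≠ 0 := by
      rw [Matrix.det_nonsing_inv, Ring.inverse_eq_inv']
      exact inv_ne_zero hdetX
    have h2 : (α • (1 : Matrix (Fin nu) (Fin nu) ℂ) + Auᴴ).det = 0 := by
      rcases mul_eq_zero.mp hdet with h | h
      · exact absurd h hdXi
      · rcases mul_eq_zero.mp h with h | h
        · exact h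
        · exact absurd h hdetX
    have h3 : ((starRingEnd ℂ α) • (1 : Matrix (Fin nu) (Fin nu) ℂ) + Au).det = 0 := by
      have he : α • (1 : Matrix (Fin nu) (Fin nu) ℂ) + Auᴴ
          = ((starRingEnd ℂ α) • (1 : Matrix (Fin nu) (Fin nu) ℂ) + Au)ᴴ := by
        rw [Matrix.conjTranspose_add, Matrix.conjTranspose_smul, Matrix.conjTranspose_one]
        simp
      rw [he, Matrix.det_conjTranspose] at h2
      exact star_eq_zero.mp h2
    have h4 : Au.charpoly.IsRoot (-(starRingEnd ℂ α)) := by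
      rw [Polynomial.IsRoot.def, CCF.eval_charpoly]
      have he : (-(starRingEnd ℂ α)) • (1 : Matrix (Fin nu) (Fin nu) ℂ) - Au
          = -((starRingEnd ℂ α) • (1 : Matrix (Fin nu) (Fin nu) ℂ) + Au) := by
        rw [neg_smul]; abel
      rw [he, Matrix.det_neg, h3, mul_zero]
    have h5 := hAu _ h4
    simp only [Complex.neg_re, Complex.conj_re] at h5
    linarith
  -- Part 2: poles of TD
  have part2 : ∀ α : ℂ, MIsPole α TD → α.re < 0 := by
    have hrep : ∀ i j, ∃ r : Polynomial ℂ, TD i j = algK r / algK F.charpoly := by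
      intro i j
      have hTDrep : TD = toK (P * Cu) * ((algK F.charpoly)⁻¹ •
          (Matrix.adjugate (charmatrix F)).map algK) * toK M + toK P := by
        rw [hTD', ← resolvent_eq, toK_mul]
        simp only [Matrix.mul_assoc]
      rw [hTDrep]
      exact entry_rep (P * Cu) _ M P F.charpoly F.charpoly_monic.ne_zero i j
    intro α hpole
    have hroot := pole_root TD F.charpoly F.charpoly_monic.ne_zero hrep α hpole
    rw [CCF.eval_charpoly] at hroot
    exact hFside α hroot
  -- Part 3: poles of TN
  have part3 : ∀ α : ℂ, MIsPole α TN → α.re ≤ 0 := by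
    have hrep : ∀ i j, ∃ r : Polynomial ℂ,
        TN i j = algK r / algK (Matrix.fromBlocks F (Aus + M * Cs) 0 As).charpoly := by
      intro i j
      have hTNrep : TN = toK (P * Matrix.fromCols Cu Cs) *
          ((algK (Matrix.fromBlocks F (Aus + M * Cs) 0 As).charpoly)⁻¹ •
            (Matrix.adjugate (charmatrix (Matrix.fromBlocks F (Aus + M * Cs) 0 As))).map algK) *
          toK (Matrix.fromRows (Bu + M * D) Bs) + toK (P * D) := by
        rw [hTN, ← resolvent_eq, toK_mul, toK_mul]
      rw [hTNrep]
      exact entry_rep _ _ _ _ _ (Matrix.fromBlocks F (Aus + M * Cs) 0 As).charpoly_monic.ne_zero i j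
    intro α hpole
    have hroot := pole_root TN _ (Matrix.fromBlocks F (Aus + M * Cs) 0 As).charpoly_monic.ne_zero
      hrep α hpole
    rw [CCF.eval_charpoly] at hroot
    have hsplit : α • (1 : Matrix (Fin nu ⊕ Fin ns) (Fin nu ⊕ Fin ns) ℂ)
          - Matrix.fromBlocks F (Aus + M * Cs) 0 As
        = Matrix.fromBlocks (α • (1 : Matrix (Fin nu) (Fin nu) ℂ) - F) (-(Aus + M * Cs)) 0
            (α • (1 : Matrix (Fin ns) (Fin ns) ℂ) - As) := by
      rw [← Matrix.fromBlocks_one, Matrix.fromBlocks_smul, smul_zero, smul_zero, fromBlocks_sub,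
        zero_sub, sub_zero]
    rw [hsplit, Matrix.det_fromBlocks_zero₂₁] at hroot
    rcases mul_eq_zero.mp hroot with h | h
    · exact le_of_lt (hFside α h)
    · refine hAs α ?_
      rw [Polynomial.IsRoot.def, CCF.eval_charpoly]
      exact h
  exact ⟨part1, part2, part3, part4⟩
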